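/- Let C = {c_1,…,c_m} be candidate locations, E = {e_1,…,e_n} expert locations in a normed vector space, and ≻^k an inducible top-k ranking profile. Suppose candidate g lies in the range of ≻_i^k for some expert i. Then d_G(j, g) < +∞ for every candidate j that is not reachable from g in G(C, E, ≻^k), and there exists a real number α such that the vector q̂ ∈ ℝ^m defined by q̂_j = d_G(g, j) for all j reachable from g and q̂_j = α − d_G(j, g) for all j not reachable from g is consistent with ≻^k. -/

import Mathlib

open scoped Classical

section VotingDefs

variable {V : Type*} [NormedAddCommGroup V] [NormedSpace ℝ V]

/-- An expert with top-`k` ranking `pref : Fin k → Fin m` prefers candidate `j` to `j'`: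
`j` is ranked at some position `h`, and `j'` is either unranked or ranked strictly later. -/
def Prefers {k m : ℕ} (pref : Fin k → Fin m) (j j' : Fin m) : Prop :=
  ∃ h : Fin k, pref h = j ∧
    ((∀ h' : Fin k, pref h' ≠ j') ∨ ∃ h' : Fin k, pref h' = j' ∧ h < h')

/-- `q` is consistent with the profile `pref` of top-`k` rankings, given candidate
locations `c` and expert locations `e`. -/
def Consistent {n k m : ℕ} (c : Fin m → V) (e : Fin n → V)
    (pref : Fin n → Fin k → Fin m) (q : Fin m → ℝ) : Prop :=
  ∀ (i : Fin n) (j j' : Fin m), Prefers (pref i) j j' →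
    q j' - ‖e i - c j'‖ ≤ q j - ‖e i - c j‖

/-- Edge relation of the graph `G(C, E, ≻^k)`. -/
def HasEdge {n k m : ℕ} (pref : Fin n → Fin k → Fin m) (j j' : Fin m) : Prop :=
  ∃ i : Fin n, Prefers (pref i) j j'

/-- Weight of the edge `j → j'` in `G(C, E, ≻^k)`: the minimum of
`‖e i - c j'‖ - ‖e i - c j‖` over experts `i` preferring `j` to `j'`. -/
noncomputable def weightG {n k m : ℕ} (c : Fin m → V) (e : Fin n → V)
    (pref : Fin n → Fin k → Fin m) (j j' : Fin m) : ℝ :=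
  sInf {x : ℝ | ∃ i : Fin n, Prefers (pref i) j j' ∧ x = ‖e i - c j'‖ - ‖e i - c j‖}

/-- A directed walk along `edge` from `g` to `h`, recorded as its list of vertices. -/
def IsWalk {α : Type*} (edge : α → α → Prop) (l : List α) (g h : α) : Prop :=
  l.Chain' edge ∧ l.head? = some g ∧ l.getLast? = some h

/-- Total weight of a walk (sum of the weights of consecutive pairs). -/
noncomputable def walkWeight {α : Type*} (w : α → α → ℝ) (l : List α) : ℝ :=
  ((l.zip l.tail).map fun p => w p.1 p.2).sum

/-- Shortest directed path distance; `+∞` if there is no directed path. -/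
noncomputable def distG {α : Type*} (edge : α → α → Prop) (w : α → α → ℝ) (g h : α) : EReal :=
  sInf {x : EReal | ∃ l : List α, IsWalk edge l g h ∧ x = ((walkWeight w l : ℝ) : EReal)}

/-- Distance (number of edges) in an unweighted directed graph; `⊤` if unreachable. -/
noncomputable def hopDist {α : Type*} (edge : α → α → Prop) (g h : α) : ℕ∞ :=
  sInf {x : ℕ∞ | ∃ l : List α, IsWalk edge l g h ∧ x = ((l.length - 1 : ℕ) : ℕ∞)}

/-- `diam(G, S)`: the longest shortest-path length between two vertices of `S`. -/
noncomputable def diamS {α : Type*} (edge : α → α → Prop) (S : Set α) : ℕ∞ :=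
  ⨆ (u : α) (_ : u ∈ S) (v : α) (_ : v ∈ S), hopDist edge u v

/-- Edge relation of the unweighted graph `G(C, E, ≻^k)[δ]`. -/
def EdgeDelta {n k m : ℕ} (e : Fin n → V) (pref : Fin n → Fin k → Fin m) (δ : ℝ)
    (j j' : Fin m) : Prop :=
  ∃ i i' : Fin n, Prefers (pref i) j j' ∧ Prefers (pref i') j' j ∧ ‖e i - e i'‖ ≤ δ

/-- Minimum cardinality of an internal `δ`-cover of `Θ`; `⊤` if no finite cover exists. -/
noncomputable def coverNum (Θ : Set V) (δ : ℝ) : ℕ∞ :=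
  sInf {x : ℕ∞ | ∃ X : Finset V, ↑X ⊆ Θ ∧ (∀ θ ∈ Θ, ∃ v ∈ X, ‖θ - v‖ ≤ δ) ∧ x = (X.card : ℕ∞)}

end VotingDefs

section WalkLemmas

variable {α : Type*} {E : α → α → Prop} {w : α → α → ℝ}

lemma walkWeight_cons_cons (w : α → α → ℝ) (a b : α) (l : List α) :
    walkWeight w (a :: b :: l) = w a b + walkWeight w (b :: l) := by
  simp [walkWeight]

lemma isWalk_singleton (E : α → α → Prop) (a : α) : IsWalk E [a] a a := by
  simp [IsWalk, List.Chain']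

lemma isWalk_pair {a b : α} (h : E a b) : IsWalk E [a, b] a b := by
  simp [IsWalk, List.Chain', h]

lemma walkWeight_singleton (w : α → α → ℝ) (a : α) : walkWeight w [a] = 0 := by
  simp [walkWeight]

lemma walkWeight_pair (w : α → α → ℝ) (a b : α) : walkWeight w [a, b] = w a b := by
  simp [walkWeight]

lemma isWalk_append (w : α → α → ℝ) :
    ∀ (l : List α) {u v v' : α}, IsWalk E l u v → E v v' →
      IsWalk E (l ++ [v']) u v' ∧ walkWeight w (l ++ [v']) = walkWeight w l + w v v' := by
  intro l
  induction l with
  | nil => rintro u v v' ⟨_, h, _⟩ _; simp at h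
  | cons a t ih =>
    rintro u v v' ⟨hch, hh, hl⟩ hE
    have hu : a = u := by simpa using hh
    subst hu
    cases t with
    | nil =>
      have hv : a = v := by simpa using hl
      subst hv
      exact ⟨isWalk_pair hE, by simp [walkWeight]⟩
    | cons b r =>
      have h1 : E a b := (List.isChain_cons_cons.mp hch).1
      have h2 : IsWalk E (b :: r) b v :=
        ⟨(List.isChain_cons_cons.mp hch).2, rfl, by simpa using hl⟩
      obtain ⟨⟨hwc, hwh, hwl⟩, hwt⟩ := ih h2 hE
      constructor
      · refine ⟨?_, by simp, ?_⟩
        · simp only [List.cons_append]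
          exact List.isChain_cons_cons.mpr ⟨h1, by simpa [List.Chain'] using hwc⟩
        · simpa using List.getLast?_concat (l := a :: b :: r)
      · simp only [List.cons_append] at hwt ⊢
        rw [walkWeight_cons_cons w a b (r ++ [v']), hwt, walkWeight_cons_cons]
        ring

lemma isWalk_prepend (w : α → α → ℝ) {l : List α} {a b v : α}
    (hE : E a b) (h : IsWalk E l b v) :
    IsWalk E (a :: l) a v ∧ walkWeight w (a :: l) = w a b + walkWeight w l := by
  obtain ⟨hch, hh, hl⟩ := h
  cases l with
  | nil => simp at hh
  | cons b' r =>
    have hb : b' = b := by simpa using hh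
    subst hb
    refine ⟨⟨List.isChain_cons_cons.mpr ⟨hE, hch⟩, rfl, by simpa using hl⟩, ?_⟩
    rw [walkWeight_cons_cons]

end WalkLemmas

section GraphLemmas

variable {V : Type*} [NormedAddCommGroup V] [NormedSpace ℝ V]
variable {n k m : ℕ} {c : Fin m → V} {e : Fin n → V} {pref : Fin n → Fin k → Fin m}
  {q : Fin m → ℝ}

lemma le_weightG (hq : Consistent c e pref q) {j j' : Fin m} (h : HasEdge pref j j') :
    q j' - q j ≤ weightG c e pref j j' := by
  obtain ⟨i, hi⟩ := h
  refine le_csInf ⟨_, i, hi, rfl⟩ ?_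
  rintro x ⟨i', hi', rfl⟩
  have := hq i' j j' hi'
  linarith

lemma weightG_le (hq : Consistent c e pref q) {i : Fin n} {j j' : Fin m}
    (h : Prefers (pref i) j j') :
    weightG c e pref j j' ≤ ‖e i - c j'‖ - ‖e i - c j‖ := by
  refine csInf_le ⟨q j' - q j, ?_⟩ ⟨i, h, rfl⟩
  rintro x ⟨i', hi', rfl⟩
  have := hq i' j j' hi'
  linarith

lemma walk_lb (hq : Consistent c e pref q) :
    ∀ (l : List (Fin m)) {u v : Fin m}, IsWalk (HasEdge pref) l u v →
      q v - q u ≤ walkWeight (weightG c e pref) l := by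
  intro l
  induction l with
  | nil => rintro u v ⟨_, h, _⟩; simp at h
  | cons a t ih =>
    rintro u v ⟨hch, hh, hl⟩
    have hu : a = u := by simpa using hh
    subst hu
    cases t with
    | nil =>
      have hv : a = v := by simpa using hl
      subst hv
      simp [walkWeight_singleton]
    | cons b r =>
      have h1 : HasEdge pref a b := (List.isChain_cons_cons.mp hch).1
      have h2 : IsWalk (HasEdge pref) (b :: r) b v :=
        ⟨(List.isChain_cons_cons.mp hch).2, rfl, by simpa using hl⟩
      have := ih h2
      have := le_weightG hq h1
      rw [walkWeight_cons_cons]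
      linarith

/-- Real-valued shortest walk distance. -/
noncomputable def Dreal {α : Type*} (E : α → α → Prop) (w : α → α → ℝ) (u v : α) : ℝ :=
  sInf {x : ℝ | ∃ l, IsWalk E l u v ∧ x = walkWeight w l}

lemma distG_eq_coe {α : Type*} {E : α → α → Prop} {w : α → α → ℝ} {u v : α} {β : ℝ}
    (hlb : ∀ l, IsWalk E l u v → β ≤ walkWeight w l)
    (hex : ∃ l, IsWalk E l u v) :
    distG E w u v = ((Dreal E w u v : ℝ) : EReal) := by
  set T : Set ℝ := {x : ℝ | ∃ l, IsWalk E l u v ∧ x = walkWeight w l} with hT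
  obtain ⟨l₀, hl₀⟩ := hex
  have hTne : T.Nonempty := ⟨_, l₀, hl₀, rfl⟩
  have hbdd : BddBelow T := ⟨β, by rintro x ⟨l, hl, rfl⟩; exact hlb l hl⟩
  have h1 : ((sInf T : ℝ) : EReal) ≤ distG E w u v := by
    refine le_sInf ?_
    rintro x ⟨l, hl, rfl⟩
    exact_mod_cast csInf_le hbdd ⟨l, hl, rfl⟩
  have hne_top : distG E w u v ≠ ⊤ := by
    have : distG E w u v ≤ ((walkWeight w l₀ : ℝ) : EReal) := sInf_le ⟨l₀, hl₀, rfl⟩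
    exact ne_top_of_le_ne_top (EReal.coe_ne_top _) this
  have hne_bot : distG E w u v ≠ ⊥ := by
    have hβ : ((β : ℝ) : EReal) ≤ distG E w u v := by
      refine le_sInf ?_
      rintro x ⟨l, hl, rfl⟩
      exact_mod_cast hlb l hl
    intro hbot
    rw [hbot, le_bot_iff] at hβ
    exact EReal.coe_ne_bot β hβ
  have hcoe : distG E w u v = (((distG E w u v).toReal : ℝ) : EReal) :=
    (EReal.coe_toReal hne_top hne_bot).symm
  have h2 : (distG E w u v).toReal ≤ sInf T := by
    refine le_csInf hTne ?_
    rintro t ⟨l, hl, rfl⟩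
    have : distG E w u v ≤ ((walkWeight w l : ℝ) : EReal) := sInf_le ⟨l, hl, rfl⟩
    rw [hcoe] at this
    exact_mod_cast this
  have h1' : sInf T ≤ (distG E w u v).toReal := by
    rw [hcoe] at h1
    exact_mod_cast h1
  have heq : Dreal E w u v = (distG E w u v).toReal := by
    rw [Dreal, ← hT]; exact le_antisymm h1' h2
  rw [hcoe, heq]

lemma Dreal_mem_le {α : Type*} {E : α → α → Prop} {w : α → α → ℝ} {u v : α}
    (hbdd : BddBelow {x : ℝ | ∃ l, IsWalk E l u v ∧ x = walkWeight w l})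
    {l : List α} (hl : IsWalk E l u v) :
    Dreal E w u v ≤ walkWeight w l :=
  csInf_le hbdd ⟨l, hl, rfl⟩

end GraphLemmas

lemma Dreal_triangle_append {α : Type*} {E : α → α → Prop} {w : α → α → ℝ} {u v v' : α}
    (hbdd' : BddBelow {x : ℝ | ∃ l, IsWalk E l u v' ∧ x = walkWeight w l})
    (hex : ∃ l, IsWalk E l u v) (hE : E v v') :
    Dreal E w u v' ≤ Dreal E w u v + w v v' := by
  have key : ∀ x ∈ {x : ℝ | ∃ l, IsWalk E l u v ∧ x = walkWeight w l},
      Dreal E w u v' - w v v' ≤ x := by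
    rintro x ⟨l, hl, rfl⟩
    obtain ⟨hw, hwt⟩ := isWalk_append w l hl hE
    have h : Dreal E w u v' ≤ walkWeight w (l ++ [v']) := csInf_le hbdd' ⟨_, hw, rfl⟩
    rw [hwt] at h
    linarith
  obtain ⟨l, hl⟩ := hex
  have h2 : Dreal E w u v' - w v v' ≤ Dreal E w u v :=
    le_csInf ⟨_, l, hl, rfl⟩ key
  linarith

lemma Dreal_triangle_prepend {α : Type*} {E : α → α → Prop} {w : α → α → ℝ} {a b v : α}
    (hbdd : BddBelow {x : ℝ | ∃ l, IsWalk E l a v ∧ x = walkWeight w l})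
    (hex : ∃ l, IsWalk E l b v) (hE : E a b) :
    Dreal E w a v ≤ w a b + Dreal E w b v := by
  have key : ∀ x ∈ {x : ℝ | ∃ l, IsWalk E l b v ∧ x = walkWeight w l},
      Dreal E w a v - w a b ≤ x := by
    rintro x ⟨l, hl, rfl⟩
    obtain ⟨hw, hwt⟩ := isWalk_prepend w hE hl
    have h : Dreal E w a v ≤ walkWeight w (a :: l) := csInf_le hbdd ⟨_, hw, rfl⟩
    rw [hwt] at h
    linarith
  obtain ⟨l, hl⟩ := hex
  have h2 : Dreal E w a v - w a b ≤ Dreal E w b v :=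
    le_csInf ⟨_, l, hl, rfl⟩ key
  linarith



/-- Suppose candidate `g` is ranked (appears in the range of `≻_i^k`) by
some expert `i`. Then every candidate `j` not reachable from `g` has `d_G(j, g) < +∞`, and
there is a real `α` such that setting `q̂ j = d_G(g, j)` for `j` reachable from `g` and
`q̂ j = α - d_G(j, g)` otherwise yields a vector consistent with `≻^k`. -/
theorem statement3 {V : Type*} [NormedAddCommGroup V] [NormedSpace ℝ V]
    {n k m : ℕ} (c : Fin m → V) (e : Fin n → V) (pref : Fin n → Fin k → Fin m)
    (hinj : ∀ i, Function.Injective (pref i))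
    (hind : ∃ q : Fin m → ℝ, Consistent c e pref q)
    (g : Fin m) (i : Fin n) (hgi : ∃ h : Fin k, pref i h = g) :
    (∀ j : Fin m, (¬ ∃ l : List (Fin m), IsWalk (HasEdge pref) l g j) →
        distG (HasEdge pref) (weightG c e pref) j g ≠ ⊤) ∧
      ∃ α : ℝ, Consistent c e pref (fun j =>
        if ∃ l : List (Fin m), IsWalk (HasEdge pref) l g j then
          (distG (HasEdge pref) (weightG c e pref) g j).toReal
        else α - (distG (HasEdge pref) (weightG c e pref) j g).toReal) := by
  classical
  obtain ⟨q, hq⟩ := hind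
  obtain ⟨hg, hgdef⟩ := hgi
  have hbddT : ∀ u v : Fin m,
      BddBelow {x : ℝ | ∃ l, IsWalk (HasEdge pref) l u v ∧ x = walkWeight (weightG c e pref) l} := by
    intro u v
    exact ⟨q v - q u, by rintro x ⟨l, hl, rfl⟩; exact walk_lb hq l hl⟩
  have hReach_g : ∃ l, IsWalk (HasEdge pref) l g g := ⟨[g], isWalk_singleton _ _⟩
  have claim1 : ∀ j : Fin m, (¬ ∃ l, IsWalk (HasEdge pref) l g j) → HasEdge pref j g := by
    intro j hj
    have hjg : j ≠ g := by rintro rfl; exact hj hReach_g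
    have hranked : ∃ h' : Fin k, pref i h' = j := by
      by_contra hc
      push_neg at hc
      exact hj ⟨[g, j], isWalk_pair ⟨i, hg, hgdef, Or.inl hc⟩⟩
    obtain ⟨h', hh'⟩ := hranked
    rcases lt_trichotomy hg h' with hlt | heq | hgt
    · exact absurd ⟨[g, j], isWalk_pair ⟨i, hg, hgdef, Or.inr ⟨h', hh', hlt⟩⟩⟩ hj
    · exfalso; apply hjg; rw [← hh', ← heq, hgdef]
    · exact ⟨i, h', hh', Or.inr ⟨hg, hgdef, hgt⟩⟩
  have ext : ∀ {j j' : Fin m}, (∃ l, IsWalk (HasEdge pref) l g j) → HasEdge pref j j' →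
      (∃ l, IsWalk (HasEdge pref) l g j') := by
    rintro j j' ⟨l, hl⟩ he
    exact ⟨l ++ [j'], (isWalk_append (weightG c e pref) l hl he).1⟩
  have hdist : ∀ u v : Fin m, (∃ l, IsWalk (HasEdge pref) l u v) →
      distG (HasEdge pref) (weightG c e pref) u v
        = ((Dreal (HasEdge pref) (weightG c e pref) u v : ℝ) : EReal) :=
    fun u v hex => distG_eq_coe (β := q v - q u) (fun l hl => walk_lb hq l hl) hex
  constructor
  · intro j hj
    rw [hdist j g ⟨[j, g], isWalk_pair (claim1 j hj)⟩]
    exact EReal.coe_ne_top _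
  · set f : Fin m × Fin m → ℝ := fun p =>
      if (¬ ∃ l, IsWalk (HasEdge pref) l g p.1) ∧ (∃ l, IsWalk (HasEdge pref) l g p.2) then
        Dreal (HasEdge pref) (weightG c e pref) g p.2
          + Dreal (HasEdge pref) (weightG c e pref) p.1 g
          - weightG c e pref p.1 p.2
      else 0 with hf
    refine ⟨Finset.univ.sup' ⟨(g, g), Finset.mem_univ _⟩ f, ?_⟩
    intro i0 j j' hpref
    have hedge : HasEdge pref j j' := ⟨i0, hpref⟩
    have hWle : weightG c e pref j j' ≤ ‖e i0 - c j'‖ - ‖e i0 - c j‖ := weightG_le hq hpref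
    dsimp only
    by_cases hRj : ∃ l, IsWalk (HasEdge pref) l g j
    · have hRj' : ∃ l, IsWalk (HasEdge pref) l g j' := ext hRj hedge
      rw [if_pos hRj, if_pos hRj', hdist g j hRj, hdist g j' hRj',
        EReal.toReal_coe, EReal.toReal_coe]
      have htri := Dreal_triangle_append (hbddT g j') hRj hedge
      linarith
    · have hTjg : ∃ l, IsWalk (HasEdge pref) l j g := ⟨[j, g], isWalk_pair (claim1 j hRj)⟩
      rw [if_neg hRj, hdist j g hTjg, EReal.toReal_coe]
      by_cases hRj' : ∃ l, IsWalk (HasEdge pref) l g j'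
      · rw [if_pos hRj', hdist g j' hRj', EReal.toReal_coe]
        have hle : f (j, j') ≤ Finset.univ.sup' ⟨(g, g), Finset.mem_univ _⟩ f :=
          Finset.le_sup' f (Finset.mem_univ _)
        rw [hf] at hle
        dsimp only at hle
        rw [if_pos ⟨hRj, hRj'⟩] at hle
        linarith
      · have hTj'g : ∃ l, IsWalk (HasEdge pref) l j' g := ⟨[j', g], isWalk_pair (claim1 j' hRj')⟩
        rw [if_neg hRj', hdist j' g hTj'g, EReal.toReal_coe]
        have htri := Dreal_triangle_prepend (hbddT j g) hTj'g hedge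
        linarith
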